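/- Fix |β| < 1 and σ > 0. Let X ∼ N(0, σ²/(1−β²)) and U uniform on (0,1) be independent, and let Φ be the standard normal CDF. Then Y = βX + σΦ⁻¹(U) and V = Φ((1−β²)X/σ − βΦ⁻¹(U)) are independent, with Y ∼ N(0, σ²/(1−β²)) and V uniform on (0,1). -/

import Mathlib

open MeasureTheory ProbabilityTheory Set
open scoped ENNReal NNReal

example : Measure.IsAddHaarMeasure (volume : Measure (ℝ × ℝ)) := by infer_instance

noncomputable def rotL (β s : ℝ) : (ℝ×ℝ) →ₗ[ℝ] (ℝ×ℝ) where
  toFun p := (β*p.1 + s*p.2, s*p.1 - β*p.2)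
  map_add' p q := by simp [Prod.ext_iff]; constructor <;> ring
  map_smul' c p := by simp [Prod.ext_iff, smul_eq_mul]; constructor <;> ring

lemma rot_invol (β s : ℝ) (h : s^2 = 1 - β^2) : (rotL β s) ∘ₗ (rotL β s) = LinearMap.id := by
  apply LinearMap.ext
  intro p
  simp [rotL, Prod.ext_iff]
  constructor
  · linear_combination p.1 * h
  · linear_combination p.2 * h

lemma rot_det (β s : ℝ) (h : s^2 = 1 - β^2) : |LinearMap.det (rotL β s)| = 1 := by
  have h2 : LinearMap.det (rotL β s) * LinearMap.det (rotL β s) = 1 := by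
    rw [← LinearMap.det_comp, rot_invol β s h, LinearMap.det_id]
  rcases mul_self_eq_one_iff.mp h2 with h | h <;> rw [h] <;> norm_num

lemma rot_map_volume (β s : ℝ) (h : s^2 = 1 - β^2) :
    Measure.map (fun p : ℝ×ℝ => (β*p.1 + s*p.2, s*p.1 - β*p.2)) (volume : Measure (ℝ×ℝ)) = volume := by
  have hd : LinearMap.det (rotL β s) ≠ 0 := by
    intro h0
    have := rot_det β s h
    rw [h0] at this; simp at this
  have := Measure.map_linearMap_addHaar_eq_smul_addHaar (volume : Measure (ℝ×ℝ)) hd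
  rw [abs_inv, rot_det β s h] at this
  simpa [rotL] using this

noncomputable def stdPDF2 : ℝ×ℝ → ℝ≥0∞ := fun p => gaussianPDF 0 1 p.1 * gaussianPDF 0 1 p.2

lemma stdPDF2_meas : Measurable stdPDF2 :=
  ((measurable_gaussianPDF 0 1).comp measurable_fst).mul
    ((measurable_gaussianPDF 0 1).comp measurable_snd)

lemma std_prod_eq : (gaussianReal 0 1).prod (gaussianReal 0 1) =
    (volume : Measure (ℝ×ℝ)).withDensity stdPDF2 := by
  have h1 : gaussianReal 0 1 = volume.withDensity (gaussianPDF 0 1) :=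
    gaussianReal_of_var_ne_zero 0 one_ne_zero
  refine (Measure.prod_eq fun s t hs ht => ?_)
  rw [Measure.volume_eq_prod, withDensity_apply _ (hs.prod ht), ← Measure.prod_restrict]
  simp only [stdPDF2]
  rw [lintegral_prod_mul ((measurable_gaussianPDF 0 1).aemeasurable)
      ((measurable_gaussianPDF 0 1).aemeasurable),
    h1, withDensity_apply _ hs, withDensity_apply _ ht]

lemma stdPDF2_rot (β s : ℝ) (h : s^2 = 1 - β^2) (p : ℝ × ℝ) :
    stdPDF2 (β*p.1 + s*p.2, s*p.1 - β*p.2) = stdPDF2 p := by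
  obtain ⟨x, z⟩ := p
  simp only [stdPDF2, gaussianPDF]
  rw [← ENNReal.ofReal_mul (gaussianPDFReal_nonneg _ _ _), ← ENNReal.ofReal_mul (gaussianPDFReal_nonneg _ _ _)]
  congr 1
  have key : -(β*x + s*z)^2/2 + -(s*x - β*z)^2/2 = -x^2/2 + -z^2/2 := by
    linear_combination (-(x^2+z^2)/2) * h
  simp only [gaussianPDFReal, NNReal.coe_one, mul_one, sub_zero]
  rw [mul_mul_mul_comm, ← Real.exp_add, key, Real.exp_add, mul_mul_mul_comm]

lemma rot_map_std (β s : ℝ) (h : s^2 = 1 - β^2) :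
    Measure.map (fun p : ℝ×ℝ => (β*p.1 + s*p.2, s*p.1 - β*p.2))
      ((gaussianReal 0 1).prod (gaussianReal 0 1)) = (gaussianReal 0 1).prod (gaussianReal 0 1) := by
  have hRm : Measurable (fun p : ℝ×ℝ => (β*p.1 + s*p.2, s*p.1 - β*p.2)) := by fun_prop
  rw [std_prod_eq]
  refine Measure.ext fun t ht => ?_
  rw [Measure.map_apply hRm ht, withDensity_apply _ (hRm ht), withDensity_apply _ ht]
  have hcong : ∀ᵐ p ∂(volume : Measure (ℝ×ℝ)),
      p ∈ (fun p : ℝ×ℝ => (β*p.1 + s*p.2, s*p.1 - β*p.2)) ⁻¹' t →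
      stdPDF2 p = stdPDF2 (β*p.1 + s*p.2, s*p.1 - β*p.2) :=
    ae_of_all _ fun p _ => (stdPDF2_rot β s h p).symm
  rw [setLIntegral_congr_fun_ae (hRm ht) hcong,
    ← setLIntegral_map ht stdPDF2_meas hRm, rot_map_volume β s h]

lemma gaussianReal_map_const_mul' (c : ℝ) (v w : ℝ≥0) (h : c^2 * (v:ℝ) = w) :
    (gaussianReal 0 v).map (c * ·) = gaussianReal 0 w := by
  rw [gaussianReal_map_const_mul c, mul_zero]
  congr 1
  rw [← NNReal.coe_inj]
  push_cast
  exact h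

lemma T_map_prod (β σ : ℝ) (hβ : |β| < 1) (hσ : 0 < σ) :
    Measure.map (fun p : ℝ×ℝ => (β*p.1 + σ*p.2, (1-β^2)*p.1/σ - β*p.2))
      ((gaussianReal 0 (Real.toNNReal (σ^2/(1-β^2)))).prod (gaussianReal 0 1))
    = (gaussianReal 0 (Real.toNNReal (σ^2/(1-β^2)))).prod (gaussianReal 0 1) := by
  have hb2 : 0 < 1 - β^2 := by nlinarith [abs_nonneg β, sq_abs β]
  obtain ⟨s, hs2, hspos⟩ : ∃ s : ℝ, s^2 = 1 - β^2 ∧ 0 < s :=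
    ⟨Real.sqrt (1-β^2), Real.sq_sqrt hb2.le, Real.sqrt_pos.mpr hb2⟩
  have hsne : s ≠ 0 := hspos.ne'
  have hτpos : 0 < σ / s := div_pos hσ hspos
  have hτ2 : (σ/s)^2 = σ^2/(1-β^2) := by rw [div_pow, hs2]
  have hnn : (0:ℝ) ≤ σ^2/(1-β^2) := by positivity
  have hcoe : ((Real.toNNReal (σ^2/(1-β^2)) : ℝ≥0) : ℝ) = σ^2/(1-β^2) := Real.coe_toNNReal _ hnn
  have hv : (gaussianReal 0 1).map ((σ/s) * ·) = gaussianReal 0 (Real.toNNReal (σ^2/(1-β^2))) := by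
    refine gaussianReal_map_const_mul' (σ/s) 1 _ ?_
    push_cast
    rw [mul_one, hτ2, hcoe]
  have hv' : (gaussianReal 0 (Real.toNNReal (σ^2/(1-β^2)))).map ((1/(σ/s)) * ·)
      = gaussianReal 0 1 := by
    refine gaussianReal_map_const_mul' (1/(σ/s)) _ 1 ?_
    push_cast
    rw [hcoe, ← hτ2]
    field_simp
  have hBm : Measurable (Prod.map (fun x : ℝ => (1/(σ/s)) * x) (id : ℝ → ℝ)) := by fun_prop
  have hAm : Measurable (Prod.map (fun x : ℝ => (σ/s) * x) (id : ℝ → ℝ)) := by fun_prop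
  have hRm : Measurable (fun p : ℝ×ℝ => (β*p.1 + s*p.2, s*p.1 - β*p.2)) := by fun_prop
  have hT : (fun p : ℝ×ℝ => (β*p.1 + σ*p.2, (1-β^2)*p.1/σ - β*p.2)) =
      (Prod.map (fun x : ℝ => (σ/s) * x) id) ∘ (fun p : ℝ×ℝ => (β*p.1 + s*p.2, s*p.1 - β*p.2)) ∘
      (Prod.map (fun x : ℝ => (1/(σ/s)) * x) id) := by
    funext p
    simp only [Function.comp_apply, Prod.map_apply, Prod.map_fst, Prod.map_snd, id_eq, Prod.mk.injEq]
    refine ⟨?_, ?_⟩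
    · field_simp
    · field_simp
      linear_combination (-p.1) * hs2
  rw [hT, ← Function.comp_assoc]
  rw [← Measure.map_map (hAm.comp hRm) hBm, ← Measure.map_map hAm hRm]
  rw [← Measure.map_prod_map _ _ (by fun_prop : Measurable fun x : ℝ => (1/(σ/s))*x) measurable_id]
  rw [show (fun x : ℝ => (1/(σ/s))*x) = ((1/(σ/s)) * ·) from rfl, hv', Measure.map_id]
  rw [rot_map_std β s hs2]
  rw [← Measure.map_prod_map _ _ (by fun_prop : Measurable fun x : ℝ => (σ/s)*x) measurable_id]
  rw [show (fun x : ℝ => (σ/s)*x) = ((σ/s) * ·) from rfl, hv, Measure.map_id]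


lemma gauss_pos {s : Set ℝ} (hs : MeasurableSet s) (h : 0 < volume s) :
    0 < gaussianReal 0 1 s := by
  rw [gaussianReal_of_var_ne_zero 0 one_ne_zero, withDensity_apply _ hs]
  rw [lintegral_pos_iff_support (measurable_gaussianPDF 0 1)]
  have hsupp : Function.support (gaussianPDF 0 1) = univ := by
    ext x
    simp [Function.mem_support, (gaussianPDF_pos 0 one_ne_zero x).ne']
  rw [hsupp, Measure.restrict_apply_univ]
  exact h

lemma gauss_Iic_pos (t : ℝ) : 0 < gaussianReal 0 1 (Iic t) :=
  gauss_pos measurableSet_Iic (by simp)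

lemma gauss_Iic_lt_one (t : ℝ) : gaussianReal 0 1 (Iic t) < 1 := by
  have h2 : 0 < gaussianReal 0 1 (Ioi t) := gauss_pos measurableSet_Ioi (by simp)
  have hu : gaussianReal 0 1 (Iic t) + gaussianReal 0 1 (Ioi t) = 1 := by
    rw [← measure_union (Iic_disjoint_Ioi le_rfl) measurableSet_Ioi, Iic_union_Ioi, measure_univ]
  calc gaussianReal 0 1 (Iic t) < gaussianReal 0 1 (Iic t) + gaussianReal 0 1 (Ioi t) :=
        ENNReal.lt_add_right (measure_ne_top _ _) h2.ne'
    _ = 1 := hu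

section Phi
variable {Φ : ℝ → ℝ} (hΦ : Φ = fun t => cdf (gaussianReal 0 1) t)
include hΦ

lemma Phi_pos (t : ℝ) : 0 < Φ t := by
  subst hΦ
  simp only [cdf_eq_real, measureReal_def]
  exact ENNReal.toReal_pos (gauss_Iic_pos t).ne' (measure_ne_top _ _)

lemma Phi_lt_one (t : ℝ) : Φ t < 1 := by
  subst hΦ
  simp only [cdf_eq_real, measureReal_def]
  rw [show (1:ℝ) = (1:ℝ≥0∞).toReal by simp]
  exact ENNReal.toReal_strict_mono ENNReal.one_ne_top (gauss_Iic_lt_one t)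

lemma ofReal_Phi (t : ℝ) : ENNReal.ofReal (Φ t) = gaussianReal 0 1 (Iic t) := by
  subst hΦ; exact ofReal_cdf _ t

lemma Phi_strictMono : StrictMono Φ := by
  intro a b hab
  have h1 : gaussianReal 0 1 (Iic a) < gaussianReal 0 1 (Iic b) := by
    have hsub : gaussianReal 0 1 (Iic b) = gaussianReal 0 1 (Iic a) + gaussianReal 0 1 (Ioc a b) := by
      rw [← measure_union (Iic_disjoint_Ioc le_rfl) measurableSet_Ioc, Iic_union_Ioc_eq_Iic hab.le]
    rw [hsub]
    exact ENNReal.lt_add_right (measure_ne_top _ _)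
      (gauss_pos measurableSet_Ioc (by simp [hab])).ne'
  rw [← ofReal_Phi hΦ, ← ofReal_Phi hΦ] at h1
  exact (ENNReal.ofReal_lt_ofReal_iff_of_nonneg (Phi_pos hΦ a).le).mp h1

lemma Phi_measurable : Measurable Φ :=
  (Phi_strictMono hΦ).monotone.measurable

end Phi


noncomputable def quant (Φinv : ℝ → ℝ) : ℝ → ℝ := fun u => if 0 < u ∧ u < 1 then Φinv u else 0

section Quant
variable {Φ Φinv : ℝ → ℝ} (hsm : StrictMono Φ)
  (hpos : ∀ t, 0 < Φ t) (hlt1 : ∀ t, Φ t < 1)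
  (hofReal : ∀ t, ENNReal.ofReal (Φ t) = gaussianReal 0 1 (Iic t))
  (hinv2 : ∀ u ∈ Ioo (0:ℝ) 1, Φ (Φinv u) = u)
include hsm hinv2

lemma quant_le_iff {u t : ℝ} (hu : u ∈ Ioo (0:ℝ) 1) : Φinv u ≤ t ↔ u ≤ Φ t := by
  constructor
  · intro h
    calc u = Φ (Φinv u) := (hinv2 u hu).symm
      _ ≤ Φ t := hsm.monotone h
  · intro h
    by_contra hc
    push_neg at hc
    have := hsm hc
    rw [hinv2 u hu] at this
    exact absurd (lt_of_le_of_lt h this) (lt_irrefl u)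

lemma quant_preimage (t : ℝ) :
    quant Φinv ⁻¹' (Iic t) = (Ioo 0 1 ∩ Iic (Φ t)) ∪ ((Ioo (0:ℝ) 1)ᶜ ∩ {u : ℝ | (0:ℝ) ≤ t}) := by
  ext u
  simp only [mem_preimage, mem_Iic, quant, mem_union, mem_inter_iff, mem_Ioo, mem_compl_iff,
    mem_setOf_eq]
  by_cases h : 0 < u ∧ u < 1
  · rw [if_pos h]
    have := quant_le_iff (Φ := Φ) (Φinv := Φinv) (t := t) hsm hinv2 (mem_Ioo.mpr h)
    simp [h, this]
  · rw [if_neg h]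
    simp [h]

lemma quant_measurable : Measurable (quant Φinv) := by
  apply measurable_of_Iic
  intro t
  rw [quant_preimage hsm hinv2]
  refine (measurableSet_Ioo.inter measurableSet_Iic).union (measurableSet_Ioo.compl.inter ?_)
  by_cases h0 : (0:ℝ) ≤ t
  · simp [h0]
  · simp [h0]

include hpos hlt1 hofReal in
lemma quant_map :
    Measure.map (quant Φinv) (volume.restrict (Ioo (0:ℝ) 1)) = gaussianReal 0 1 := by
  have hqm : Measurable (quant Φinv) := quant_measurable hsm hinv2
  haveI : IsFiniteMeasure (volume.restrict (Ioo (0:ℝ) 1)) :=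
    ⟨by simp [Measure.restrict_apply_univ]⟩
  haveI : IsFiniteMeasure (Measure.map (quant Φinv) (volume.restrict (Ioo (0:ℝ) 1))) :=
    ⟨by rw [Measure.map_apply hqm MeasurableSet.univ]; simp [Measure.restrict_apply_univ]⟩
  refine Measure.ext_of_Iic _ _ fun t => ?_
  rw [Measure.map_apply hqm measurableSet_Iic,
    Measure.restrict_apply (hqm measurableSet_Iic), quant_preimage hsm hinv2]
  have hset : ((Ioo 0 1 ∩ Iic (Φ t)) ∪ ((Ioo (0:ℝ) 1)ᶜ ∩ {u : ℝ | (0:ℝ) ≤ t})) ∩ Ioo 0 1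
      = Ioc 0 (Φ t) := by
    ext u
    simp only [mem_inter_iff, mem_union, mem_Ioo, mem_Ioc, mem_Iic, mem_compl_iff, mem_setOf_eq]
    constructor
    · rintro ⟨h1 | h1, h2, h3⟩
      · exact ⟨h2, h1.2⟩
      · exact absurd ⟨h2, h3⟩ h1.1
    · rintro ⟨h1, h2⟩
      exact ⟨Or.inl ⟨⟨h1, lt_of_le_of_lt h2 (hlt1 t)⟩, h2⟩, h1, lt_of_le_of_lt h2 (hlt1 t)⟩
  rw [hset, Real.volume_Ioc, sub_zero, hofReal]

include hpos hlt1 hofReal in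
lemma phi_map :
    Measure.map Φ (gaussianReal 0 1) = volume.restrict (Ioo (0:ℝ) 1) := by
  have hΦm : Measurable Φ := hsm.monotone.measurable
  refine Measure.ext_of_Iic _ _ fun t => ?_
  rw [Measure.map_apply hΦm measurableSet_Iic, Measure.restrict_apply measurableSet_Iic]
  by_cases h1 : t < 1
  · by_cases h0 : 0 < t
    · have hpre : Φ ⁻¹' (Iic t) = Iic (Φinv t) := by
        ext x
        simp only [mem_preimage, mem_Iic]
        constructor
        · intro h
          by_contra hc
          push_neg at hc
          have := hsm hc
          rw [hinv2 t ⟨h0, h1⟩] at this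
          exact absurd (lt_of_le_of_lt h this) (lt_irrefl (Φ x))
        · intro h
          calc Φ x ≤ Φ (Φinv t) := hsm.monotone h
            _ = t := hinv2 t ⟨h0, h1⟩
      have hset : Iic t ∩ Ioo (0:ℝ) 1 = Ioc 0 t := by
        ext u
        simp only [mem_inter_iff, mem_Iic, mem_Ioo, mem_Ioc]
        exact ⟨fun ⟨ha, hb, _⟩ => ⟨hb, ha⟩, fun ⟨ha, hb⟩ => ⟨hb, ha, lt_of_le_of_lt hb h1⟩⟩
      rw [hpre, hset, ← hofReal (Φinv t), hinv2 t ⟨h0, h1⟩, Real.volume_Ioc, sub_zero]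
    · push_neg at h0
      have hpre : Φ ⁻¹' (Iic t) = ∅ := by
        ext x
        simp only [mem_preimage, mem_Iic, mem_empty_iff_false, iff_false, not_le]
        exact lt_of_le_of_lt h0 (hpos x)
      have hset : Iic t ∩ Ioo (0:ℝ) 1 = ∅ := by
        ext u
        simp only [mem_inter_iff, mem_Iic, mem_Ioo, mem_empty_iff_false, iff_false, not_and]
        intro hut hu0
        exact absurd (lt_of_lt_of_le hu0 (hut.trans h0)) (lt_irrefl 0)
      rw [hpre, hset]
      simp
  · push_neg at h1
    have hpre : Φ ⁻¹' (Iic t) = univ := by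
      ext x
      simp only [mem_preimage, mem_Iic, mem_univ, iff_true]
      exact ((hlt1 x).le).trans h1
    have hset : Iic t ∩ Ioo (0:ℝ) 1 = Ioo 0 1 := by
      ext u
      simp only [mem_inter_iff, mem_Iic, mem_Ioo]
      exact ⟨fun h => h.2, fun h => ⟨h.2.le.trans h1, h⟩⟩
    rw [hpre, hset]
    simp

end Quant


theorem gaussian_rosenblatt_independence
    {Ω : Type*} [MeasurableSpace Ω] (P : Measure Ω) [IsProbabilityMeasure P]
    (β σ : ℝ) (hβ : |β| < 1) (hσ : 0 < σ)
    (X U : Ω → ℝ) (hXm : Measurable X) (hUm : Measurable U)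
    (hindep : IndepFun X U P)
    (hX : Measure.map X P = gaussianReal 0 (Real.toNNReal (σ ^ 2 / (1 - β ^ 2))))
    (hU : Measure.map U P = volume.restrict (Set.Ioo (0 : ℝ) 1))
    (Φ Φinv : ℝ → ℝ)
    (hΦ : Φ = fun t => cdf (gaussianReal 0 1) t)
    (hΦinv : (∀ t : ℝ, Φinv (Φ t) = t) ∧ ∀ u ∈ Set.Ioo (0 : ℝ) 1, Φ (Φinv u) = u) :
    IndepFun (fun ω => β * X ω + σ * Φinv (U ω))
        (fun ω => Φ ((1 - β ^ 2) * X ω / σ - β * Φinv (U ω))) P ∧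
    Measure.map (fun ω => β * X ω + σ * Φinv (U ω)) P =
      gaussianReal 0 (Real.toNNReal (σ ^ 2 / (1 - β ^ 2))) ∧
    Measure.map (fun ω => Φ ((1 - β ^ 2) * X ω / σ - β * Φinv (U ω))) P =
      volume.restrict (Set.Ioo (0 : ℝ) 1) := by
  obtain ⟨hinv1, hinv2⟩ := hΦinv
  have hsm : StrictMono Φ := Phi_strictMono hΦ
  have hpos : ∀ t, 0 < Φ t := Phi_pos hΦ
  have hlt1 : ∀ t, Φ t < 1 := Phi_lt_one hΦ
  have hofReal : ∀ t, ENNReal.ofReal (Φ t) = gaussianReal 0 1 (Iic t) := ofReal_Phi hΦ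
  have hΦm : Measurable Φ := hsm.monotone.measurable
  have hqm : Measurable (quant Φinv) := quant_measurable hsm hinv2
  set Z : Ω → ℝ := fun ω => quant Φinv (U ω) with hZdef
  have hZm : Measurable Z := hqm.comp hUm
  have hZ : Measure.map Z P = gaussianReal 0 1 := by
    rw [show Z = quant Φinv ∘ U from rfl, ← Measure.map_map hqm hUm, hU,
      quant_map hsm hpos hlt1 hofReal hinv2]
  have hindepXZ : IndepFun X Z P := hindep.comp measurable_id hqm
  have hjoint : Measure.map (fun ω => (X ω, Z ω)) P
      = (gaussianReal 0 (Real.toNNReal (σ ^ 2 / (1 - β ^ 2)))).prod (gaussianReal 0 1) := by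
    rw [← hX, ← hZ]
    exact (indepFun_iff_map_prod_eq_prod_map_map hXm.aemeasurable hZm.aemeasurable).mp hindepXZ
  set Y : Ω → ℝ := fun ω => β * X ω + σ * Z ω with hYdef
  set W : Ω → ℝ := fun ω => (1 - β ^ 2) * X ω / σ - β * Z ω with hWdef
  have hYm : Measurable Y := (hXm.const_mul β).add (hZm.const_mul σ)
  have hWm : Measurable W := ((hXm.const_mul _).div_const σ).sub (hZm.const_mul β)
  have hTm : Measurable (fun p : ℝ×ℝ => (β*p.1 + σ*p.2, (1-β^2)*p.1/σ - β*p.2)) := by fun_prop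
  have hYW : Measure.map (fun ω => (Y ω, W ω)) P
      = (gaussianReal 0 (Real.toNNReal (σ ^ 2 / (1 - β ^ 2)))).prod (gaussianReal 0 1) := by
    have hcomp : (fun ω => (Y ω, W ω))
        = (fun p : ℝ×ℝ => (β*p.1 + σ*p.2, (1-β^2)*p.1/σ - β*p.2)) ∘ (fun ω => (X ω, Z ω)) := rfl
    rw [hcomp, ← Measure.map_map hTm (hXm.prodMk hZm), hjoint, T_map_prod β σ hβ hσ]
  have hY : Measure.map Y P = gaussianReal 0 (Real.toNNReal (σ ^ 2 / (1 - β ^ 2))) := by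
    have h1 : Y = Prod.fst ∘ (fun ω => (Y ω, W ω)) := rfl
    rw [h1, ← Measure.map_map measurable_fst (hYm.prodMk hWm), hYW, Measure.map_fst_prod,
      measure_univ, one_smul]
  have hW : Measure.map W P = gaussianReal 0 1 := by
    have h1 : W = Prod.snd ∘ (fun ω => (Y ω, W ω)) := rfl
    rw [h1, ← Measure.map_map measurable_snd (hYm.prodMk hWm), hYW, Measure.map_snd_prod,
      measure_univ, one_smul]
  have hindepYW : IndepFun Y W P :=
    (indepFun_iff_map_prod_eq_prod_map_map hYm.aemeasurable hWm.aemeasurable).mpr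
      (by rw [hYW, hY, hW])
  have hV : Measure.map (fun ω => Φ (W ω)) P = volume.restrict (Ioo (0:ℝ) 1) := by
    rw [show (fun ω => Φ (W ω)) = Φ ∘ W from rfl, ← Measure.map_map hΦm hWm, hW,
      phi_map hsm hpos hlt1 hofReal hinv2]
  have hindepYV : IndepFun Y (fun ω => Φ (W ω)) P := hindepYW.comp measurable_id hΦm
  have hUae : ∀ᵐ ω ∂P, U ω ∈ Ioo (0:ℝ) 1 := by
    have h1 : P (U ⁻¹' (Ioo 0 1)) = 1 := by
      rw [← Measure.map_apply hUm measurableSet_Ioo, hU, Measure.restrict_apply measurableSet_Ioo]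
      simp
    rw [ae_iff]
    have h2 : {ω | ¬ U ω ∈ Ioo (0:ℝ) 1} = (U ⁻¹' (Ioo 0 1))ᶜ := rfl
    rw [h2, measure_compl (hUm measurableSet_Ioo) (measure_ne_top _ _), h1]
    simp
  have hZae : (fun ω => Φinv (U ω)) =ᵐ[P] Z := by
    filter_upwards [hUae] with ω h
    simp only [hZdef, quant, h.1, h.2, and_self, if_true]
  have hYae : (fun ω => β * X ω + σ * Φinv (U ω)) =ᵐ[P] Y := by
    filter_upwards [hZae] with ω h
    show β * X ω + σ * Φinv (U ω) = β * X ω + σ * Z ω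
    rw [h]
  have hVae : (fun ω => Φ ((1 - β ^ 2) * X ω / σ - β * Φinv (U ω))) =ᵐ[P] (fun ω => Φ (W ω)) := by
    filter_upwards [hZae] with ω h
    show Φ ((1 - β ^ 2) * X ω / σ - β * Φinv (U ω)) = Φ (W ω)
    rw [hWdef]
    simp only
    rw [h]
  refine ⟨hindepYV.congr hYae.symm hVae.symm, ?_, ?_⟩
  · rw [Measure.map_congr hYae, hY]
  · rw [Measure.map_congr hVae, hV]
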